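/- An archimedean linearly ordered abelian group admits an injective order-preserving group homomorphism into the additive group of real numbers (Hölder's theorem). -/

import Mathlib

section HolderAux

variable {Γ : Type*} [AddCommGroup Γ] [LinearOrder Γ] [IsOrderedAddMonoid Γ] [Archimedean Γ] {e : Γ}

/-- The set of rationals `p/n` with `p • e ≤ n • x`. -/
private def hS (e x : Γ) : Set ℝ :=
  {r | ∃ p n : ℤ, 0 < n ∧ p • e ≤ n • x ∧ r = (p : ℝ) / (n : ℝ)}

private lemma exists_greatest_zsmul_le (he : 0 < e) (c : Γ) :
    ∃ k : ℤ, k • e ≤ c ∧ ∀ j : ℤ, j • e ≤ c → j ≤ k := by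
  obtain ⟨a, ha⟩ := Archimedean.arch (-c) he
  obtain ⟨b, hb⟩ := Archimedean.arch c he
  refine Int.exists_greatest_of_bdd ⟨(b : ℤ), fun j hj => ?_⟩ ⟨-(a : ℤ), ?_⟩
  · have : j • e ≤ (b : ℤ) • e := hj.trans (by rwa [natCast_zsmul])
    exact (zsmul_le_zsmul_iff_left he).1 this
  · have : (-(a : ℤ)) • e = -((a : ℤ) • e) := by simp
    rw [this, natCast_zsmul]
    exact neg_le.1 ha

private lemma hS_nonempty (he : 0 < e) (x : Γ) : (hS e x).Nonempty := by
  obtain ⟨k, hk, -⟩ := exists_greatest_zsmul_le he x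
  exact ⟨(k : ℝ) / 1, k, 1, one_pos, by simpa using hk, by norm_num⟩

private lemma hS_bddAbove (he : 0 < e) (x : Γ) : BddAbove (hS e x) := by
  obtain ⟨b, hb⟩ := Archimedean.arch x he
  refine ⟨(b : ℝ), fun r hr => ?_⟩
  obtain ⟨p, n, hn, hpe, rfl⟩ := hr
  have hb' : x ≤ (b : ℤ) • e := by rwa [natCast_zsmul]
  have h1 : n • x ≤ n • ((b : ℤ) • e) := zsmul_le_zsmul_right hn.le hb'
  have h2 : p • e ≤ (n * (b : ℤ)) • e := by
    rw [mul_zsmul]; exact hpe.trans h1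
  have hp : p ≤ n * (b : ℤ) := (zsmul_le_zsmul_iff_left he).1 h2
  rw [div_le_iff₀ (by exact_mod_cast hn)]
  calc (p : ℝ) ≤ ((n * (b : ℤ) : ℤ) : ℝ) := by exact_mod_cast hp
    _ = (b : ℝ) * (n : ℝ) := by push_cast; ring

private noncomputable def hf (e x : Γ) : ℝ := sSup (hS e x)

private lemma le_hf (he : 0 < e) {x : Γ} {p n : ℤ} (hn : 0 < n) (h : p • e ≤ n • x) :
    (p : ℝ) / (n : ℝ) ≤ hf e x :=
  le_csSup (hS_bddAbove he x) ⟨p, n, hn, h, rfl⟩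

private lemma hf_le (he : 0 < e) {x : Γ} {c : ℝ}
    (h : ∀ p n : ℤ, 0 < n → p • e ≤ n • x → (p : ℝ) / (n : ℝ) ≤ c) : hf e x ≤ c := by
  refine csSup_le (hS_nonempty he x) ?_
  rintro r ⟨p, n, hn, hpe, rfl⟩
  exact h p n hn hpe

private lemma hf_add (he : 0 < e) (x y : Γ) : hf e (x + y) = hf e x + hf e y := by
  have key₁ : hf e x + hf e y ≤ hf e (x + y) := by
    have : ∀ r ∈ hS e x, ∀ s ∈ hS e y, r + s ≤ hf e (x + y) := by
      rintro r ⟨p₁, n₁, hn₁, h₁, rfl⟩ s ⟨p₂, n₂, hn₂, h₂, rfl⟩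
      have hsum : (p₁ * n₂ + p₂ * n₁) • e ≤ (n₁ * n₂) • (x + y) := by
        have e₁ : (n₂ * p₁) • e ≤ (n₂ * n₁) • x := by
          rw [mul_zsmul, mul_zsmul]; exact zsmul_le_zsmul_right hn₂.le h₁
        have e₂ : (n₁ * p₂) • e ≤ (n₁ * n₂) • y := by
          rw [mul_zsmul, mul_zsmul]; exact zsmul_le_zsmul_right hn₁.le h₂
        calc (p₁ * n₂ + p₂ * n₁) • e = (n₂ * p₁) • e + (n₁ * p₂) • e := by
              rw [← add_zsmul]; ring_nf
          _ ≤ (n₂ * n₁) • x + (n₁ * n₂) • y := add_le_add e₁ e₂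
          _ = (n₁ * n₂) • (x + y) := by rw [smul_add, mul_comm n₂ n₁]
      have hmem := le_hf he (mul_pos hn₁ hn₂) hsum
      have : (p₁ : ℝ) / n₁ + (p₂ : ℝ) / n₂ = ((p₁ * n₂ + p₂ * n₁ : ℤ) : ℝ) / ((n₁ * n₂ : ℤ) : ℝ) := by
        have h₁' : (n₁ : ℝ) ≠ 0 := by exact_mod_cast hn₁.ne'
        have h₂' : (n₂ : ℝ) ≠ 0 := by exact_mod_cast hn₂.ne'
        push_cast
        field_simp
      rw [this]; exact hmem
    -- combine
    have h1 : ∀ s ∈ hS e y, hf e x ≤ hf e (x + y) - s := by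
      intro s hs
      refine csSup_le (hS_nonempty he x) fun r hr => ?_
      linarith [this r hr s hs]
    have h2 : hf e y ≤ hf e (x + y) - hf e x := by
      refine csSup_le (hS_nonempty he y) fun s hs => ?_
      linarith [h1 s hs]
    linarith
  have key₂ : hf e (x + y) ≤ hf e x + hf e y := by
    refine hf_le he fun p n hn hpe => ?_
    -- show p/n ≤ hf x + hf y using scaling
    refine le_of_forall_pos_le_add fun ε hε => ?_
    obtain ⟨m, hm⟩ := exists_nat_gt (1 / ε)
    have hm0 : (0:ℝ) < m := lt_trans (by positivity) hm
    have hmz : (0:ℤ) < (m : ℤ) := by exact_mod_cast hm0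
    set N : ℤ := (m : ℤ) * n with hN
    have hN0 : 0 < N := mul_pos hmz hn
    obtain ⟨k₁, hk₁, hk₁m⟩ := exists_greatest_zsmul_le he (N • x)
    obtain ⟨k₂, hk₂, hk₂m⟩ := exists_greatest_zsmul_le he (N • y)
    -- (m*p) • e ≤ N • (x+y)
    have hscaled : ((m : ℤ) * p) • e ≤ N • (x + y) := by
      rw [mul_zsmul, hN, mul_zsmul]
      exact zsmul_le_zsmul_right hmz.le hpe
    -- m*p ≤ k₁ + k₂ + 1
    have hk₁' : ¬ (k₁ + 1) • e ≤ N • x := fun h => by linarith [hk₁m _ h]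
    have hk₂' : ¬ (k₂ + 1) • e ≤ N • y := fun h => by linarith [hk₂m _ h]
    have hlt : ((m : ℤ) * p) • e < (k₁ + k₂ + 2) • e := by
      have h1 : N • x < (k₁ + 1) • e := lt_of_not_ge hk₁'
      have h2 : N • y < (k₂ + 1) • e := lt_of_not_ge hk₂'
      calc ((m : ℤ) * p) • e ≤ N • (x + y) := hscaled
        _ = N • x + N • y := smul_add N x y
        _ < (k₁ + 1) • e + (k₂ + 1) • e := add_lt_add h1 h2
        _ = (k₁ + k₂ + 2) • e := by rw [← add_zsmul]; ring_nf
    have hple : (m : ℤ) * p ≤ k₁ + k₂ + 1 := by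
      have := (zsmul_lt_zsmul_iff_left he).1 hlt
      omega
    -- p/n ≤ k₁/N + k₂/N + 1/N ≤ hf x + hf y + 1/N ≤ hf x + hf y + ε
    have hN0R : (0:ℝ) < (N : ℝ) := by exact_mod_cast hN0
    have hdiv : (p : ℝ) / n = (((m : ℤ) * p : ℤ) : ℝ) / (N : ℝ) := by
      have hn' : (n : ℝ) ≠ 0 := by exact_mod_cast hn.ne'
      rw [hN]; push_cast
      field_simp
    have hb1 : ((k₁ : ℝ)) / (N : ℝ) ≤ hf e x := le_hf he hN0 hk₁
    have hb2 : ((k₂ : ℝ)) / (N : ℝ) ≤ hf e y := le_hf he hN0 hk₂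
    have hstep : (((m : ℤ) * p : ℤ) : ℝ) / (N : ℝ) ≤ (k₁ : ℝ) / N + (k₂ : ℝ) / N + 1 / N := by
      rw [← add_div, ← add_div, div_le_div_iff₀ hN0R hN0R]
      have : (((m : ℤ) * p : ℤ) : ℝ) ≤ ((k₁ + k₂ + 1 : ℤ) : ℝ) := by exact_mod_cast hple
      push_cast at this ⊢
      nlinarith [hN0R]
    have heps : 1 / (N : ℝ) ≤ ε := by
      have hnR : (1:ℝ) ≤ (n : ℝ) := by exact_mod_cast hn
      have hNge : (m : ℝ) ≤ (N : ℝ) := by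
        rw [hN]; push_cast; nlinarith
      have hm' : 1 / ε < (N : ℝ) := lt_of_lt_of_le hm hNge
      rw [div_le_iff₀ hN0R]
      calc (1:ℝ) = ε * (1 / ε) := by field_simp
        _ ≤ ε * (N : ℝ) := by nlinarith
    calc (p : ℝ) / n = (((m : ℤ) * p : ℤ) : ℝ) / (N : ℝ) := hdiv
      _ ≤ (k₁ : ℝ) / N + (k₂ : ℝ) / N + 1 / N := hstep
      _ ≤ hf e x + hf e y + ε := by linarith
  linarith

private lemma hf_strictMono (he : 0 < e) : StrictMono (hf e) := by
  intro x y hxy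
  have hyx : 0 < y - x := sub_pos.2 hxy
  obtain ⟨n, hn⟩ := Archimedean.arch (e + e) hyx
  have hn0 : 0 < n := by
    rcases Nat.eq_zero_or_pos n with h | h
    · exfalso; rw [h] at hn; simp at hn; exact absurd hn he.not_ge
    · exact h
  have hnz : (0:ℤ) < (n : ℤ) := by exact_mod_cast hn0
  have hn' : e + e ≤ (n : ℤ) • (y - x) := by rwa [natCast_zsmul]
  obtain ⟨k, hk, hkm⟩ := exists_greatest_zsmul_le he ((n : ℤ) • x)
  -- (k+2) • e ≤ n • y
  have hky : (k + 2) • e ≤ (n : ℤ) • y := by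
    have : (k + 2) • e = k • e + (e + e) := by
      rw [add_zsmul]; norm_num [two_zsmul]
    rw [this]
    calc k • e + (e + e) ≤ (n : ℤ) • x + (n : ℤ) • (y - x) := add_le_add hk hn'
      _ = (n : ℤ) • y := by rw [← smul_add]; congr 1; abel
  -- hf x ≤ (k+1)/n
  have hub : hf e x ≤ ((k + 1 : ℤ) : ℝ) / ((n : ℤ) : ℝ) := by
    refine hf_le he fun p m hm hpe => ?_
    -- p • e ≤ m • x ; (k+1) • e > n • x ⇒ p * n < (k+1) * m
    have h1 : ((n : ℤ) * p) • e ≤ ((n : ℤ) * m) • x := by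
      rw [mul_zsmul, mul_zsmul]; exact zsmul_le_zsmul_right hnz.le hpe
    have h2 : (m * (n : ℤ)) • x < (m * (k + 1)) • e := by
      have hx1 : (n : ℤ) • x < (k + 1) • e := by
        by_contra h
        push_neg at h
        linarith [hkm _ h]
      rw [mul_zsmul, mul_zsmul]
      exact zsmul_lt_zsmul_right hm hx1
    have h3 : ((n : ℤ) * p) • e < (m * (k + 1)) • e := by
      calc ((n : ℤ) * p) • e ≤ ((n : ℤ) * m) • x := h1
        _ = (m * (n : ℤ)) • x := by rw [mul_comm]
        _ < (m * (k + 1)) • e := h2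
    have h4 : (n : ℤ) * p < m * (k + 1) := (zsmul_lt_zsmul_iff_left he).1 h3
    have hmR : (0:ℝ) < (m : ℝ) := by exact_mod_cast hm
    have hnR : (0:ℝ) < ((n : ℤ) : ℝ) := by exact_mod_cast hnz
    rw [div_le_div_iff₀ hmR hnR]
    have h5 : (((n : ℤ) * p : ℤ) : ℝ) ≤ ((m * (k + 1) : ℤ) : ℝ) := by exact_mod_cast h4.le
    push_cast at h5 ⊢
    nlinarith
  have hlb : ((k + 2 : ℤ) : ℝ) / ((n : ℤ) : ℝ) ≤ hf e y := le_hf he hnz hky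
  have hnR : (0:ℝ) < ((n : ℤ) : ℝ) := by exact_mod_cast hnz
  calc hf e x ≤ ((k + 1 : ℤ) : ℝ) / ((n : ℤ) : ℝ) := hub
    _ < ((k + 2 : ℤ) : ℝ) / ((n : ℤ) : ℝ) := by
        rw [div_lt_div_iff₀ hnR hnR]; push_cast at hnR ⊢; nlinarith
    _ ≤ hf e y := hlb

end HolderAux

theorem holder_embedding_into_reals
    (Γ : Type*) [AddCommGroup Γ] [LinearOrder Γ] [IsOrderedAddMonoid Γ] [Archimedean Γ] :
    ∃ f : Γ →+ ℝ, Function.Injective f ∧ StrictMono f := by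
  rcases subsingleton_or_nontrivial Γ with h | h
  · refine ⟨0, fun a b _ => Subsingleton.elim a b, fun a b hab => ?_⟩
    exact absurd (Subsingleton.elim a b) hab.ne
  · obtain ⟨a, ha⟩ := exists_ne (0 : Γ)
    have he : 0 < |a| := abs_pos.2 ha
    refine ⟨AddMonoidHom.mk' (hf |a|) (fun x y => hf_add he x y), ?_, ?_⟩
    · exact (hf_strictMono he).injective
    · exact hf_strictMono he
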